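/- For every natural number m, the cubes of the Fibonacci numbers satisfy, in ℤ, 4 * (∑_{n=1}^{m} (fib n)³) = (fib (m+2))³ − 3 * (fib (m+1))³ + 3 * (−1)^m * fib m + 2 (Rao's identity). -/
import Mathlib

lemma cassini (n : ℕ) : (Nat.fib (n+2) : ℤ) * Nat.fib n - (Nat.fib (n+1):ℤ)^2 = (-1)^(n+1) := by
  induction n with
  | zero => simp
  | succ k ih =>
    have h : (Nat.fib (k+3) : ℤ) = Nat.fib (k+1) + Nat.fib (k+2) := by
      exact_mod_cast congrArg (Nat.cast : ℕ → ℤ) (Nat.fib_add_two (n := k+1))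
    have h2 : (Nat.fib (k+2) : ℤ) = Nat.fib k + Nat.fib (k+1) := by
      exact_mod_cast congrArg (Nat.cast : ℕ → ℤ) (Nat.fib_add_two (n := k))
    rw [h2] at ih
    rw [h, h2]
    rw [pow_succ, pow_succ]
    rw [pow_succ] at ih
    ring_nf
    ring_nf at ih
    linarith [ih]

theorem sum_fib_cubes_rao (m : ℕ) :
    4 * (∑ n ∈ Finset.Icc 1 m, (Nat.fib n : ℤ) ^ 3) =
      (Nat.fib (m + 2) : ℤ) ^ 3 - 3 * (Nat.fib (m + 1) : ℤ) ^ 3 +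
        3 * (-1 : ℤ) ^ m * (Nat.fib m : ℤ) + 2 := by
  induction m with
  | zero => simp
  | succ k ih =>
    rw [Finset.sum_Icc_succ_top (by omega), mul_add, ih]
    have h : (Nat.fib (k+3) : ℤ) = Nat.fib (k+1) + Nat.fib (k+2) := by
      exact_mod_cast congrArg (Nat.cast : ℕ → ℤ) (Nat.fib_add_two (n := k+1))
    have h2 : (Nat.fib (k+2) : ℤ) = Nat.fib k + Nat.fib (k+1) := by
      exact_mod_cast congrArg (Nat.cast : ℕ → ℤ) (Nat.fib_add_two (n := k))
    have hc := cassini k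
    rw [h2] at hc
    rw [h, h2]
    ring_nf
    ring_nf at hc
    nlinarith [hc]
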